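/- Let Σ be an alphabet, 𝕄 = (M,+,val,𝟘) a timed valuation monoid, 𝓛 ⊆ 𝕋Σ⁺ an unambiguously recognizable timed language and r : 𝕋Σ⁺ → M a recognizable quantitative timed language over 𝕄. Then the quantitative timed language r ∩ 𝓛 is recognizable over 𝕄. -/

import Mathlib

open scoped NNReal Classical

/-! # Core definitions: timed automata and weighted timed automata -/

/-- Comparison operators ⋈ ∈ {<, ≤, =, ≥, >}. -/
inductive Cmp : Type
  | lt | le | eq | ge | gt
  deriving DecidableEq

/-- Evaluation of a comparison `r ⋈ c` for `r ∈ ℝ≥0` and `c ∈ ℕ`. -/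
def Cmp.eval : Cmp → ℝ≥0 → ℕ → Prop
  | .lt, r, c => r < (c : ℝ≥0)
  | .le, r, c => r ≤ (c : ℝ≥0)
  | .eq, r, c => r = (c : ℝ≥0)
  | .ge, r, c => (c : ℝ≥0) ≤ r
  | .gt, r, c => (c : ℝ≥0) < r

/-- Clock constraints over a set `C` of clocks: `True` or conjunctions of `x ⋈ c`. -/
inductive ClockConstraint (C : Type) : Type
  | tt : ClockConstraint C
  | atom : C → Cmp → ℕ → ClockConstraint C
  | conj : ClockConstraint C → ClockConstraint C → ClockConstraint C

/-- A clock valuation assigns a non-negative real to each clock. -/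
def ClockVal (C : Type) : Type := C → ℝ≥0

/-- Satisfaction of clock constraints. -/
def ClockConstraint.Sat {C : Type} (ν : ClockVal C) : ClockConstraint C → Prop
  | .tt => True
  | .atom x op c => op.eval (ν x) c
  | .conj φ ψ => φ.Sat ν ∧ ψ.Sat ν

/-- `ν + t`: add `t` to every clock. -/
def ClockVal.add {C : Type} (ν : ClockVal C) (t : ℝ≥0) : ClockVal C := fun x => ν x + t

/-- `ν[Λ := 0]`: reset the clocks in `Λ` to `0`. -/
noncomputable def ClockVal.reset {C : Type} (ν : ClockVal C) (Λ : Set C) : ClockVal C :=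
  fun x => if x ∈ Λ then 0 else ν x

/-- The clock valuation assigning `0` to every clock. -/
def ClockVal.zero {C : Type} : ClockVal C := fun _ => 0

/-- An edge of a timed automaton: an element of `L × Σ × Φ(C) × 2^C × L`. -/
structure Edge (L A C : Type) : Type where
  src : L
  label : A
  guard : ClockConstraint C
  reset : Set C
  dst : L

/-- A timed automaton over the alphabet `A`. -/
structure TimedAutomaton (A : Type) : Type 1 where
  L : Type
  C : Type
  finL : Finite L
  finC : Finite C
  I : Set L
  F : Set L
  E : Set (Edge L A C)
  finE : E.Finite

/-- A (non-empty finite) timed word over `A`. -/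
abbrev TimedWord (A : Type) : Type := { w : List (A × ℝ≥0) // w ≠ [] }

/-- `T.IsRunFrom ℓ ν w es` holds iff `es` is the sequence of edges of a run of `T`
reading the timed word `w`, starting in location `ℓ` with clock valuation `ν`,
and ending in a final location. -/
def TimedAutomaton.IsRunFrom {A : Type} (T : TimedAutomaton A) :
    T.L → ClockVal T.C → List (A × ℝ≥0) → List (Edge T.L A T.C) → Prop
  | ℓ, _, [], [] => ℓ ∈ T.F
  | ℓ, ν, (a, t) :: w, e :: es =>
      e ∈ T.E ∧ e.src = ℓ ∧ e.label = a ∧ e.guard.Sat (ν.add t) ∧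
      T.IsRunFrom e.dst ((ν.add t).reset e.reset) w es
  | _, _, [], _ :: _ => False
  | _, _, _ :: _, [] => False

/-- `Run_T(w)`: the set of runs (identified with their edge sequences) of `T` on `w`. -/
def TimedAutomaton.RunOn {A : Type} (T : TimedAutomaton A) (w : TimedWord A) :
    Set (List (Edge T.L A T.C)) :=
  { es | ∃ ℓ₀ ∈ T.I, T.IsRunFrom ℓ₀ ClockVal.zero w.1 es }

/-- `L(T)`: the timed language accepted by `T`. -/
def TimedAutomaton.Lang {A : Type} (T : TimedAutomaton A) : Set (TimedWord A) :=
  { w | (T.RunOn w).Nonempty }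

/-- A timed automaton is unambiguous if every timed word has at most one run. -/
def TimedAutomaton.Unambiguous {A : Type} (T : TimedAutomaton A) : Prop :=
  ∀ w : TimedWord A, (T.RunOn w).Subsingleton

/-- A timed automaton is deterministic if it has a single initial location and the guards of
any two distinct edges with the same source and label are jointly unsatisfiable. -/
def TimedAutomaton.Deterministic {A : Type} (T : TimedAutomaton A) : Prop :=
  (∃ ℓ, T.I = {ℓ}) ∧
  ∀ e₁ ∈ T.E, ∀ e₂ ∈ T.E, e₁.src = e₂.src → e₁.label = e₂.label → e₁ ≠ e₂ →
    ∀ ν : ClockVal T.C, ¬ (e₁.guard.Sat ν ∧ e₂.guard.Sat ν)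

/-- A timed automaton is sequential if it has a single initial location and any two edges
with the same source and label are equal. -/
def TimedAutomaton.Sequential {A : Type} (T : TimedAutomaton A) : Prop :=
  (∃ ℓ, T.I = {ℓ}) ∧
  ∀ e₁ ∈ T.E, ∀ e₂ ∈ T.E, e₁.src = e₂.src → e₁.label = e₂.label → e₁ = e₂

/-- A timed language is recognizable by a timed automaton satisfying `P`. -/
def TLRecognizableBy {A : Type} (P : TimedAutomaton A → Prop) (𝓛 : Set (TimedWord A)) : Prop :=
  ∃ T : TimedAutomaton A, P T ∧ T.Lang = 𝓛

/-- A weighted timed automaton over the alphabet `A` and (the domain `M` of) a timed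
valuation monoid: a timed automaton together with weights on locations and edges.
The timed valuation monoid itself is given by an `AddCommMonoid M` instance together with a
timed valuation function `val : List ((M × M) × ℝ≥0) → M` (only its values on non-empty
lists, i.e. on `𝕋(M×M)⁺`, ever matter). -/
structure WTA (A M : Type) extends TimedAutomaton A where
  wtL : L → M
  wtE : Edge L A C → M

/-- The timed word `wt♯(ρ) ∈ 𝕋(M×M)⁺` associated with a run: the `i`-th letter is
`((wt(ℓ_{i-1}), wt(e_i)), t_i)`, where `ℓ_{i-1}` is the source location of edge `e_i`. -/
def WTA.runWord {A M : Type} (W : WTA A M) (w : List (A × ℝ≥0))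
    (es : List (Edge W.L A W.C)) : List ((M × M) × ℝ≥0) :=
  List.zipWith (fun (p : A × ℝ≥0) e => ((W.wtL e.src, W.wtE e), p.2)) w es

/-- The behavior `‖W‖ : 𝕋A⁺ → M` of a WTA: `‖W‖(w) = Σ (val(wt♯(ρ)) : ρ ∈ Run_W(w))`,
the empty sum being `0` (the monoid unit `𝟘`). -/
noncomputable def WTA.behavior {A M : Type} [AddCommMonoid M]
    (val : List ((M × M) × ℝ≥0) → M) (W : WTA A M) (w : TimedWord A) : M :=
  ∑ᶠ es ∈ W.toTimedAutomaton.RunOn w, val (W.runWord w.1 es)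

/-- A quantitative timed language `r : 𝕋A⁺ → M` is recognizable over the timed valuation
monoid `(M, +, val, 𝟘)` by a WTA whose underlying timed automaton satisfies `P`. -/
def QTLRecognizableBy {A M : Type} [AddCommMonoid M] (val : List ((M × M) × ℝ≥0) → M)
    (P : TimedAutomaton A → Prop) (r : TimedWord A → M) : Prop :=
  ∃ W : WTA A M, P W.toTimedAutomaton ∧ ∀ w, W.behavior val w = r w

/-- Recognizability (no restriction on the underlying timed automaton). -/
def QTLRecognizable {A M : Type} [AddCommMonoid M] (val : List ((M × M) × ℝ≥0) → M)
    (r : TimedWord A → M) : Prop :=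
  ∃ W : WTA A M, ∀ w, W.behavior val w = r w

/-- Renaming of timed words along `h : Γ → A`. -/
def mapTimedWord {Γ A : Type} (h : Γ → A) (v : TimedWord Γ) : TimedWord A :=
  ⟨v.1.map (fun p => (h p.1, p.2)), by
    cases v with
    | mk l hl => cases l with
      | nil => exact absurd rfl hl
      | cons p l => simp⟩

/-- `h(r)(w) = Σ (r(v) : v ∈ 𝕋Γ⁺, h(v) = w)` (a finite sum when `Γ` is finite). -/
noncomputable def pushQTL {Γ A M : Type} [AddCommMonoid M] (h : Γ → A)
    (r : TimedWord Γ → M) (w : TimedWord A) : M :=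
  ∑ᶠ v ∈ { v : TimedWord Γ | mapTimedWord h v = w }, r v

/-- `(val ∘ g)(w) = val((g(a₁),t₁)…(g(aₙ),tₙ))`. -/
def valComp {A M : Type} (val : List ((M × M) × ℝ≥0) → M) (g : A → M × M)
    (w : TimedWord A) : M :=
  val (w.1.map (fun p => (g p.1, p.2)))

/-- The intersection `r ∩ 𝓛` of a quantitative timed language with a timed language. -/
noncomputable def interQTL {A M : Type} [Zero M] (r : TimedWord A → M)
    (𝓛 : Set (TimedWord A)) (w : TimedWord A) : M :=
  if w ∈ 𝓛 then r w else 0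

/-- Membership in the Nivat class `N^P(A, 𝕄)`: `𝕃 = h((val ∘ g) ∩ 𝓛)` for some alphabet `Γ`,
maps `h : Γ → A`, `g : Γ → M × M` and a timed language `𝓛` recognizable by a timed
automaton satisfying `P`. -/
def NivatMem {A M : Type} [AddCommMonoid M] (val : List ((M × M) × ℝ≥0) → M)
    (P : ∀ {Γ : Type}, TimedAutomaton Γ → Prop) (𝕃 : TimedWord A → M) : Prop :=
  ∃ (Γ : Type) (_ : Finite Γ) (_ : Nonempty Γ) (h : Γ → A) (g : Γ → M × M)
    (𝓛 : Set (TimedWord Γ)),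
      TLRecognizableBy P 𝓛 ∧ ∀ w, 𝕃 w = pushQTL h (interQTL (valComp val g) 𝓛) w

/-- Membership in the class `H^P(A, 𝕄)`: `𝕃 = h(r)` for some alphabet `Γ`, `h : Γ → A`
and a quantitative timed language `r` recognizable by a WTA whose underlying timed
automaton satisfies `P`. -/
def HMem {A M : Type} [AddCommMonoid M] (val : List ((M × M) × ℝ≥0) → M)
    (P : ∀ {Γ : Type}, TimedAutomaton Γ → Prop) (𝕃 : TimedWord A → M) : Prop :=
  ∃ (Γ : Type) (_ : Finite Γ) (_ : Nonempty Γ) (h : Γ → A) (r : TimedWord Γ → M),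
      QTLRecognizableBy val (fun T => P T) r ∧ ∀ w, 𝕃 w = pushQTL h r w

/-- Idempotency of a timed valuation monoid. -/
def IsIdempotent (M : Type) [Add M] : Prop := ∀ m : M, m + m = m

/-- Location-independence of a timed valuation function: the value of `val` on a non-empty
timed word over `M × M` depends only on the second components and the time stamps. -/
def LocIndep {M : Type} (val : List ((M × M) × ℝ≥0) → M) : Prop :=
  ∀ l l' : List ((M × M) × ℝ≥0), l ≠ [] →
    l.map (fun p => (p.1.2, p.2)) = l'.map (fun p => (p.1.2, p.2)) → val l = val l'

/-! ## Auxiliary: product construction -/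

/-- Relabel clocks of a constraint. -/
def cmap {C D : Type} (f : C → D) : ClockConstraint C → ClockConstraint D
  | .tt => .tt
  | .atom x op c => .atom (f x) op c
  | .conj φ ψ => .conj (cmap f φ) (cmap f ψ)

lemma sat_cmap {C D : Type} (f : C → D) (φ : ClockConstraint C) (ν : ClockVal D) :
    (cmap f φ).Sat ν ↔ φ.Sat (fun x => ν (f x)) := by
  induction φ with
  | tt => simp [cmap, ClockConstraint.Sat]
  | atom x op c => simp [cmap, ClockConstraint.Sat]
  | conj φ ψ ihφ ihψ => simp [cmap, ClockConstraint.Sat, ihφ, ihψ]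

def unmapL {C D : Type} : ClockConstraint (C ⊕ D) → ClockConstraint C
  | .tt => .tt
  | .atom (Sum.inl x) op c => .atom x op c
  | .atom (Sum.inr _) _ _ => .tt
  | .conj φ ψ => .conj (unmapL φ) (unmapL ψ)

def unmapR {C D : Type} : ClockConstraint (C ⊕ D) → ClockConstraint D
  | .tt => .tt
  | .atom (Sum.inl _) _ _ => .tt
  | .atom (Sum.inr x) op c => .atom x op c
  | .conj φ ψ => .conj (unmapR φ) (unmapR ψ)

lemma unmapL_cmap {C D : Type} (φ : ClockConstraint C) :
    unmapL (cmap (Sum.inl : C → C ⊕ D) φ) = φ := by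
  induction φ with
  | tt => rfl
  | atom x op c => rfl
  | conj φ ψ ihφ ihψ => simp [cmap, unmapL, ihφ, ihψ]

lemma unmapR_cmap {C D : Type} (φ : ClockConstraint D) :
    unmapR (cmap (Sum.inr : D → C ⊕ D) φ) = φ := by
  induction φ with
  | tt => rfl
  | atom x op c => rfl
  | conj φ ψ ihφ ihψ => simp [cmap, unmapR, ihφ, ihψ]

def leftC {C : Type} : ClockConstraint C → ClockConstraint C
  | .conj φ _ => φ
  | φ => φ

def rightC {C : Type} : ClockConstraint C → ClockConstraint C
  | .conj _ ψ => ψ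
  | φ => φ

/-- Product edge. -/
def prodEdge {L1 L2 A C1 C2 : Type} (e1 : Edge L1 A C1) (e2 : Edge L2 A C2) :
    Edge (L1 × L2) A (C1 ⊕ C2) :=
  ⟨(e1.src, e2.src), e1.label,
    .conj (cmap Sum.inl e1.guard) (cmap Sum.inr e2.guard),
    {x | Sum.elim (· ∈ e1.reset) (· ∈ e2.reset) x}, (e1.dst, e2.dst)⟩

def projL {L1 L2 A C1 C2 : Type} (e : Edge (L1 × L2) A (C1 ⊕ C2)) : Edge L1 A C1 :=
  ⟨e.src.1, e.label, unmapL (leftC e.guard), Sum.inl ⁻¹' e.reset, e.dst.1⟩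

def projR {L1 L2 A C1 C2 : Type} (e : Edge (L1 × L2) A (C1 ⊕ C2)) : Edge L2 A C2 :=
  ⟨e.src.2, e.label, unmapR (rightC e.guard), Sum.inr ⁻¹' e.reset, e.dst.2⟩

lemma projL_prodEdge {L1 L2 A C1 C2 : Type} (e1 : Edge L1 A C1) (e2 : Edge L2 A C2) :
    projL (prodEdge e1 e2) = e1 := by
  cases e1
  simp [projL, prodEdge, leftC, unmapL_cmap]

lemma projR_prodEdge {L1 L2 A C1 C2 : Type} (e1 : Edge L1 A C1) (e2 : Edge L2 A C2)
    (hl : e1.label = e2.label) : projR (prodEdge e1 e2) = e2 := by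
  cases e2
  simp [projR, prodEdge, rightC, unmapR_cmap, hl]

/-- The product WTA of a WTA and a timed automaton. -/
noncomputable def prodWTA {A M : Type} (W : WTA A M) (T : TimedAutomaton A) : WTA A M where
  L := W.L × T.L
  C := W.C ⊕ T.C
  finL := by have := W.finL; have := T.finL; infer_instance
  finC := by have := W.finC; have := T.finC; infer_instance
  I := W.I ×ˢ T.I
  F := W.F ×ˢ T.F
  E := (fun p : Edge W.L A W.C × Edge T.L A T.C => prodEdge p.1 p.2) ''
        {p | p.1 ∈ W.E ∧ p.2 ∈ T.E ∧ p.1.label = p.2.label}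
  finE := ((W.finE.prod T.finE).subset (fun p hp => ⟨hp.1, hp.2.1⟩)).image _
  wtL := fun p => W.wtL p.1
  wtE := fun e => W.wtE (projL e)

lemma mem_prodE_of {A M : Type} (W : WTA A M) (T : TimedAutomaton A)
    {e1 : Edge W.L A W.C} {e2 : Edge T.L A T.C}
    (h1 : e1 ∈ W.E) (h2 : e2 ∈ T.E) (hl : e1.label = e2.label) :
    prodEdge e1 e2 ∈ (prodWTA W T).E :=
  ⟨(e1, e2), ⟨h1, h2, hl⟩, rfl⟩

lemma mem_prodE_elim {A M : Type} (W : WTA A M) (T : TimedAutomaton A)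
    {e : Edge (W.L × T.L) A (W.C ⊕ T.C)} (h : e ∈ (prodWTA W T).E) :
    projL e ∈ W.E ∧ projR e ∈ T.E ∧ e = prodEdge (projL e) (projR e) := by
  obtain ⟨⟨f1, f2⟩, ⟨h1, h2, hl⟩, heq⟩ := h
  simp only at heq hl h1 h2
  subst heq
  rw [projL_prodEdge, projR_prodEdge _ _ hl]
  exact ⟨h1, h2, rfl⟩

lemma add_comp_inl {C1 C2 : Type} (ν : ClockVal (C1 ⊕ C2)) (t : ℝ≥0) :
    (fun x => (ν.add t) (Sum.inl x) : ClockVal C1) = ClockVal.add (fun x => ν (Sum.inl x)) t := rfl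

lemma add_comp_inr {C1 C2 : Type} (ν : ClockVal (C1 ⊕ C2)) (t : ℝ≥0) :
    (fun x => (ν.add t) (Sum.inr x) : ClockVal C2) = ClockVal.add (fun x => ν (Sum.inr x)) t := rfl

lemma reset_comp_inl {C1 C2 : Type} (ν : ClockVal (C1 ⊕ C2)) (Λ1 : Set C1) (Λ2 : Set C2) :
    (fun x => (ν.reset {x | Sum.elim (· ∈ Λ1) (· ∈ Λ2) x}) (Sum.inl x) : ClockVal C1)
      = ClockVal.reset (fun x => ν (Sum.inl x)) Λ1 := by
  funext x
  simp [ClockVal.reset]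
  exact if_congr Iff.rfl rfl rfl

lemma reset_comp_inr {C1 C2 : Type} (ν : ClockVal (C1 ⊕ C2)) (Λ1 : Set C1) (Λ2 : Set C2) :
    (fun x => (ν.reset {x | Sum.elim (· ∈ Λ1) (· ∈ Λ2) x}) (Sum.inr x) : ClockVal C2)
      = ClockVal.reset (fun x => ν (Sum.inr x)) Λ2 := by
  funext x
  simp [ClockVal.reset]
  exact if_congr Iff.rfl rfl rfl

lemma sat_prodGuard {L1 L2 A C1 C2 : Type} (e1 : Edge L1 A C1) (e2 : Edge L2 A C2)
    (ν : ClockVal (C1 ⊕ C2)) :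
    (prodEdge e1 e2).guard.Sat ν ↔
      e1.guard.Sat (fun x => ν (Sum.inl x)) ∧ e2.guard.Sat (fun x => ν (Sum.inr x)) := by
  simp [prodEdge, ClockConstraint.Sat, sat_cmap]

lemma isRunFrom_prod_elim {A M : Type} (W : WTA A M) (T : TimedAutomaton A) :
    ∀ (w : List (A × ℝ≥0)) (es : List (Edge (W.L × T.L) A (W.C ⊕ T.C)))
      (ℓ1 : W.L) (ℓ2 : T.L) (ν : ClockVal (W.C ⊕ T.C)),
      (prodWTA W T).toTimedAutomaton.IsRunFrom (ℓ1, ℓ2) ν w es →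
      W.toTimedAutomaton.IsRunFrom ℓ1 (fun x => ν (Sum.inl x)) w (es.map projL) ∧
      T.IsRunFrom ℓ2 (fun x => ν (Sum.inr x)) w (es.map projR) ∧
      es = List.zipWith prodEdge (es.map projL) (es.map projR) := by
  intro w
  induction w with
  | nil =>
    intro es ℓ1 ℓ2 ν h
    cases es with
    | nil =>
      simp only [TimedAutomaton.IsRunFrom, prodWTA, Set.mem_prod] at h
      exact ⟨h.1, h.2, rfl⟩
    | cons e es => simp [TimedAutomaton.IsRunFrom] at h
  | cons p w ih =>
    obtain ⟨a, t⟩ := p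
    intro es ℓ1 ℓ2 ν h
    cases es with
    | nil => simp [TimedAutomaton.IsRunFrom] at h
    | cons e es =>
      obtain ⟨hmem, hsrc, hlab, hsat, hrest⟩ := h
      obtain ⟨hE1, hE2, heq⟩ := mem_prodE_elim W T hmem
      have hsat' := hsat
      rw [heq] at hsat'
      replace hsat' := (sat_prodGuard _ _ _).mp hsat'
      have hres : e.reset =
          {x | Sum.elim (· ∈ (projL e).reset) (· ∈ (projR e).reset) x} := by
        conv_lhs => rw [heq]
        rfl
      have hdst : e.dst = ((projL e).dst, (projR e).dst) := by
        conv_lhs => rw [heq]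
        rfl
      rw [hdst] at hrest
      obtain ⟨ih1, ih2, ih3⟩ := ih es (projL e).dst (projR e).dst _ hrest
      have hv1 : (fun x => ((ν.add t).reset e.reset) (Sum.inl x))
          = ClockVal.reset (ClockVal.add (fun x => ν (Sum.inl x)) t) (projL e).reset := by
        rw [hres, reset_comp_inl, add_comp_inl]
      have hv2 : (fun x => ((ν.add t).reset e.reset) (Sum.inr x))
          = ClockVal.reset (ClockVal.add (fun x => ν (Sum.inr x)) t) (projR e).reset := by
        rw [hres, reset_comp_inr, add_comp_inr]
      replace ih1 := (congrArg (fun ν' => W.toTimedAutomaton.IsRunFrom (projL e).dst ν' w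
        (List.map projL es)) hv1).mp ih1
      replace ih2 := (congrArg (fun ν' => T.IsRunFrom (projR e).dst ν' w
        (List.map projR es)) hv2).mp ih2
      refine ⟨⟨hE1, ?_, ?_, ?_, ih1⟩, ⟨hE2, ?_, ?_, ?_, ih2⟩, ?_⟩
      · rw [show (projL e).src = e.src.1 from rfl, hsrc]
      · exact hlab
      · rw [← add_comp_inl]; exact hsat'.1
      · rw [show (projR e).src = e.src.2 from rfl, hsrc]
      · exact hlab
      · rw [← add_comp_inr]; exact hsat'.2
      · rw [List.map_cons, List.map_cons, List.zipWith_cons_cons, ← ih3, ← heq]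

lemma isRunFrom_prod_intro {A M : Type} (W : WTA A M) (T : TimedAutomaton A) :
    ∀ (w : List (A × ℝ≥0)) (es1 : List (Edge W.L A W.C)) (es2 : List (Edge T.L A T.C))
      (ℓ1 : W.L) (ℓ2 : T.L) (ν : ClockVal (W.C ⊕ T.C)),
      W.toTimedAutomaton.IsRunFrom ℓ1 (fun x => ν (Sum.inl x)) w es1 →
      T.IsRunFrom ℓ2 (fun x => ν (Sum.inr x)) w es2 →
      (prodWTA W T).toTimedAutomaton.IsRunFrom (ℓ1, ℓ2) ν w
        (List.zipWith prodEdge es1 es2) := by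
  intro w
  induction w with
  | nil =>
    intro es1 es2 ℓ1 ℓ2 ν h1 h2
    cases es1 with
    | cons e es => simp [TimedAutomaton.IsRunFrom] at h1
    | nil =>
      cases es2 with
      | cons e es => simp [TimedAutomaton.IsRunFrom] at h2
      | nil =>
        simp only [TimedAutomaton.IsRunFrom] at h1 h2 ⊢
        exact Set.mem_prod.mpr ⟨h1, h2⟩
  | cons p w ih =>
    obtain ⟨a, t⟩ := p
    intro es1 es2 ℓ1 ℓ2 ν h1 h2
    cases es1 with
    | nil => simp [TimedAutomaton.IsRunFrom] at h1
    | cons e1 es1 =>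
      cases es2 with
      | nil => simp [TimedAutomaton.IsRunFrom] at h2
      | cons e2 es2 =>
        obtain ⟨hE1, hsrc1, hlab1, hsat1, hrest1⟩ := h1
        obtain ⟨hE2, hsrc2, hlab2, hsat2, hrest2⟩ := h2
        refine ⟨mem_prodE_of W T hE1 hE2 (hlab1.trans hlab2.symm), ?_, hlab1, ?_, ?_⟩
        · rw [show (prodEdge e1 e2).src = (e1.src, e2.src) from rfl, hsrc1, hsrc2]
        · refine (sat_prodGuard _ _ _).mpr ?_
          exact ⟨hsat1, hsat2⟩
        · have := ih es1 es2 e1.dst e2.dst ((ν.add t).reset (prodEdge e1 e2).reset) ?_ ?_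
          · exact this
          · rw [show (prodEdge e1 e2).reset =
                {x | Sum.elim (· ∈ e1.reset) (· ∈ e2.reset) x} from rfl,
              reset_comp_inl, add_comp_inl]
            exact hrest1
          · rw [show (prodEdge e1 e2).reset =
                {x | Sum.elim (· ∈ e1.reset) (· ∈ e2.reset) x} from rfl,
              reset_comp_inr, add_comp_inr]
            exact hrest2

lemma length_of_isRunFrom {A : Type} (T : TimedAutomaton A) :
    ∀ (w : List (A × ℝ≥0)) (ℓ : T.L) (ν : ClockVal T.C) (es : List (Edge T.L A T.C)),
      T.IsRunFrom ℓ ν w es → es.length = w.length := by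
  intro w
  induction w with
  | nil =>
    intro ℓ ν es h
    cases es with
    | nil => rfl
    | cons e es => simp [TimedAutomaton.IsRunFrom] at h
  | cons p w ih =>
    obtain ⟨a, t⟩ := p
    intro ℓ ν es h
    cases es with
    | nil => simp [TimedAutomaton.IsRunFrom] at h
    | cons e es =>
      obtain ⟨_, _, _, _, hrest⟩ := h
      simp [ih _ _ _ hrest]

lemma map_projL_zip {L1 L2 A C1 C2 : Type} :
    ∀ (l1 : List (Edge L1 A C1)) (l2 : List (Edge L2 A C2)), l1.length ≤ l2.length →
      (List.zipWith prodEdge l1 l2).map projL = l1 := by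
  intro l1
  induction l1 with
  | nil => intro l2 _; simp
  | cons e l1 ih =>
    intro l2 hlen
    cases l2 with
    | nil => simp at hlen
    | cons f l2 =>
      simp only [List.zipWith_cons_cons, List.map_cons, projL_prodEdge]
      rw [ih l2 (by simpa using hlen)]

lemma runWord_zip {A M : Type} (W : WTA A M) (T : TimedAutomaton A) :
    ∀ (w : List (A × ℝ≥0)) (es1 : List (Edge W.L A W.C)) (es2 : List (Edge T.L A T.C)),
      es1.length ≤ es2.length →
      (prodWTA W T).runWord w (List.zipWith prodEdge es1 es2) = W.runWord w es1 := by
  intro w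
  induction w with
  | nil => intro es1 es2 _; simp [WTA.runWord]
  | cons p w ih =>
    intro es1 es2 hlen
    cases es1 with
    | nil => simp [WTA.runWord]; cases es2 <;> rfl
    | cons e1 es1 =>
      cases es2 with
      | nil => simp at hlen
      | cons e2 es2 =>
        have := ih es1 es2 (by simpa using hlen)
        show ((W.wtL e1.src, W.wtE (projL (prodEdge e1 e2))), p.2) ::
            (prodWTA W T).runWord w (List.zipWith prodEdge es1 es2) =
          ((W.wtL e1.src, W.wtE e1), p.2) :: W.runWord w es1
        rw [projL_prodEdge]; exact congrArg _ this

lemma runOn_prod {A M : Type} (W : WTA A M) (T : TimedAutomaton A) (w : TimedWord A) :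
    (prodWTA W T).toTimedAutomaton.RunOn w =
      {es | ∃ es1 ∈ W.toTimedAutomaton.RunOn w, ∃ es2 ∈ T.RunOn w,
        es = List.zipWith prodEdge es1 es2} := by
  ext es
  constructor
  · rintro ⟨⟨ℓ1, ℓ2⟩, hI, hrun⟩
    obtain ⟨h1, h2, h3⟩ := isRunFrom_prod_elim W T w.1 es ℓ1 ℓ2 ClockVal.zero hrun
    have hI' := Set.mem_prod.mp hI
    exact ⟨es.map projL, ⟨ℓ1, hI'.1, h1⟩, es.map projR, ⟨ℓ2, hI'.2, h2⟩, h3⟩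
  · rintro ⟨es1, ⟨ℓ1, hI1, h1⟩, es2, ⟨ℓ2, hI2, h2⟩, rfl⟩
    exact ⟨(ℓ1, ℓ2), Set.mem_prod.mpr ⟨hI1, hI2⟩,
      isRunFrom_prod_intro W T w.1 es1 es2 ℓ1 ℓ2 ClockVal.zero h1 h2⟩
/-- If `𝓛 ⊆ 𝕋Σ⁺` is an unambiguously recognizable timed language and
`r : 𝕋Σ⁺ → M` is a recognizable quantitative timed language over a timed valuation monoid
`𝕄`, then `r ∩ 𝓛` is recognizable over `𝕄`. -/
theorem interQTL_recognizable_of_unambiguous {S M : Type} [Finite S] [Nonempty S]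
    [AddCommMonoid M] (val : List ((M × M) × ℝ≥0) → M)
    (𝓛 : Set (TimedWord S)) (h𝓛 : TLRecognizableBy TimedAutomaton.Unambiguous 𝓛)
    (r : TimedWord S → M) (hr : QTLRecognizable val r) :
    QTLRecognizable val (interQTL r 𝓛) := by
  obtain ⟨T, hT, hTLang⟩ := h𝓛
  obtain ⟨W, hW⟩ := hr
  refine ⟨prodWTA W T, fun w => ?_⟩
  by_cases hw : w ∈ 𝓛
  · have hwT : w ∈ T.Lang := by rw [hTLang]; exact hw
    obtain ⟨es2, hes2⟩ := hwT
    have hsingle : T.RunOn w = {es2} :=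
      Set.eq_singleton_iff_unique_mem.mpr ⟨hes2, fun x hx => hT w hx hes2⟩
    have himg : (prodWTA W T).toTimedAutomaton.RunOn w
        = (fun es1 => List.zipWith prodEdge es1 es2) '' W.toTimedAutomaton.RunOn w := by
      rw [runOn_prod]; ext es
      simp only [Set.mem_setOf_eq, Set.mem_image, hsingle, Set.mem_singleton_iff]
      constructor
      · rintro ⟨es1, h1, es2', rfl, rfl⟩; exact ⟨es1, h1, rfl⟩
      · rintro ⟨es1, h1, rfl⟩; exact ⟨es1, h1, es2, rfl, rfl⟩
    have hlen2 : es2.length = w.1.length := by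
      obtain ⟨ℓ2, _, hrun⟩ := hes2
      exact length_of_isRunFrom T w.1 ℓ2 _ es2 hrun
    have hinj : Set.InjOn (fun es1 => List.zipWith prodEdge es1 es2)
        (W.toTimedAutomaton.RunOn w) := by
      intro x hx y hy hxy
      obtain ⟨ℓx, _, hrx⟩ := hx
      obtain ⟨ℓy, _, hry⟩ := hy
      have hlx : x.length = w.1.length := length_of_isRunFrom _ w.1 _ _ _ hrx
      have hly : y.length = w.1.length := length_of_isRunFrom _ w.1 _ _ _ hry
      have h := congrArg (List.map projL) hxy
      rwa [map_projL_zip x es2 (by rw [hlx, hlen2]),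
        map_projL_zip y es2 (by rw [hly, hlen2])] at h
    have : interQTL r 𝓛 w = r w := by simp [interQTL, hw]
    rw [this, ← hW w]
    unfold WTA.behavior
    rw [himg]
    refine (finsum_mem_image hinj).trans (finsum_mem_congr rfl ?_)
    intro es1 h1
    obtain ⟨ℓ1, _, hr1⟩ := h1
    exact congrArg val (runWord_zip W T w.1 es1 es2
      (by rw [length_of_isRunFrom _ w.1 _ _ _ hr1, hlen2]))
  · have hwT : w ∉ T.Lang := by rw [hTLang]; exact hw
    have hempty : (prodWTA W T).toTimedAutomaton.RunOn w = ∅ := by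
      rw [runOn_prod]
      ext es
      simp only [Set.mem_setOf_eq, Set.mem_empty_iff_false, iff_false]
      refine iff_of_false ?_ (fun h => h)
      rintro ⟨es1, _, es2, hes2, _⟩
      exact hwT ⟨es2, hes2⟩
    unfold WTA.behavior
    rw [hempty, finsum_mem_empty]
    simp [interQTL, hw]
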